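/- Let x, x̃ ∈ ℝ^N with ⟨x,x⟩ = ⟨x̃,x̃⟩ = 1, ⟨x̃,x⟩ ≠ −1, ⟨Ax,x⟩ ≠ 0, and p defined by h p_k = 2(x̃_k + x_k)/(1+⟨x̃,x⟩) − 4α_k x_k/⟨Ax,x⟩ + 2x_k where A = diag(α_1,…,α_N). Then 2⟨Ax̃,x⟩/(1+⟨x̃,x⟩) = ⟨Ax,x⟩ − h⟨Ax,p⟩ − (h²/4)⟨p,p⟩⟨Ax,x⟩. -/

import Mathlib

open Finset

set_option maxHeartbeats 1000000 in
theorem adler_I1_canonical (N : ℕ) (α : Fin N → ℝ) (h : ℝ) (hh : h ≠ 0)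
    (x xt p : Fin N → ℝ)
    (hs1 : ∑ i, x i * x i = 1) (hs2 : ∑ i, xt i * xt i = 1)
    (h1 : (∑ i, xt i * x i) ≠ -1) (h2 : (∑ i, α i * x i * x i) ≠ 0)
    (hp : ∀ k, h * p k = 2 * (xt k + x k) / (1 + ∑ i, xt i * x i)
        - 4 * α k * x k / (∑ i, α i * x i * x i) + 2 * x k) :
    2 * (∑ i, α i * xt i * x i) / (1 + ∑ i, xt i * x i)
      = (∑ i, α i * x i * x i) - h * (∑ i, α i * x i * p i)
        - (h ^ 2 / 4) * (∑ i, p i * p i) * (∑ i, α i * x i * x i) := by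
  set S1 : ℝ := ∑ i, xt i * x i with hS1
  set A : ℝ := ∑ i, α i * x i * x i with hA
  set T : ℝ := ∑ i, α i * xt i * x i with hT
  set Q : ℝ := ∑ i, α i * α i * x i * x i with hQ
  have hS : (1 : ℝ) + S1 ≠ 0 := by
    intro hc; apply h1; linarith
  have e1 : h * (∑ i, α i * x i * p i)
      = (2/(1+S1)) * T + (2/(1+S1)) * A - (4/A) * Q + 2 * A := by
    have : h * (∑ i, α i * x i * p i)
        = ∑ i, ((2/(1+S1)) * (α i * xt i * x i) + (2/(1+S1)) * (α i * x i * x i)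
            - (4/A) * (α i * α i * x i * x i) + 2 * (α i * x i * x i)) := by
      rw [Finset.mul_sum]
      refine Finset.sum_congr rfl fun i _ => ?_
      have hpi := hp i
      have : h * (α i * x i * p i) = α i * x i * (h * p i) := by ring
      rw [this, hpi]
      field_simp
    rw [this]
    simp only [Finset.sum_add_distrib, Finset.sum_sub_distrib, ← Finset.mul_sum]
    rfl
  have e2 : h ^ 2 * (∑ i, p i * p i)
      = (4/(1+S1)^2) * 1 + (8/(1+S1)^2 + 8/(1+S1)) * S1
        + (4/(1+S1)^2 + 8/(1+S1) + 4) * 1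
        + (-16/((1+S1)*A)) * T + (-16/((1+S1)*A) - 16/A) * A + (16/A^2) * Q := by
    have : h ^ 2 * (∑ i, p i * p i)
        = ∑ i, ((4/(1+S1)^2) * (xt i * xt i) + (8/(1+S1)^2 + 8/(1+S1)) * (xt i * x i)
            + (4/(1+S1)^2 + 8/(1+S1) + 4) * (x i * x i)
            + (-16/((1+S1)*A)) * (α i * xt i * x i)
            + (-16/((1+S1)*A) - 16/A) * (α i * x i * x i)
            + (16/A^2) * (α i * α i * x i * x i)) := by
      rw [Finset.mul_sum]
      refine Finset.sum_congr rfl fun i _ => ?_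
      have hpi := hp i
      have : h ^ 2 * (p i * p i) = (h * p i) * (h * p i) := by ring
      rw [this, hpi]
      field_simp
      ring
    rw [this]
    simp only [Finset.sum_add_distrib, ← Finset.mul_sum, hs1, hs2]
    rfl
  have e3 : (h ^ 2 / 4) * (∑ i, p i * p i) * A = (h ^ 2 * (∑ i, p i * p i)) * A / 4 := by
    ring
  rw [e3, e2, e1]
  field_simp
  ring
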